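/- arXiv:2409.14915 — 6 statements merged into one kernel-verified Lean document; each statement's English description precedes it below -/
import Mathlib

section
/- An equivalence relation δ on a lattice L is a local congruence if and only if for all a, b, c ∈ L with (a,b) ∈ δ and a ∧ b ≤ c ≤ a ∨ b, it holds that (a ∨ c, b ∨ c) ∈ δ and (a ∧ c, b ∧ c) ∈ δ. -/
variable {L : Type*}

def LocalCong [Lattice L] (δ : L → L → Prop) : Prop :=
  Equivalence δ ∧
  (∀ x a b, δ x a → δ x b → δ x (a ⊔ b) ∧ δ x (a ⊓ b)) ∧
  (∀ x a b c, δ x a → δ x b → a ≤ c → c ≤ b → δ x c)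

theorem stmt1 [Lattice L] (δ : L → L → Prop) (hE : Equivalence δ) :
    LocalCong δ ↔
      (∀ a b c, δ a b → a ⊓ b ≤ c → c ≤ a ⊔ b →
        δ (a ⊔ c) (b ⊔ c) ∧ δ (a ⊓ c) (b ⊓ c)) := by
  constructor
  · rintro ⟨hEq, hSub, hConv⟩ a b c hab h1 h2
    have hab' : δ a (a ⊓ b) := (hSub a a b (hEq.refl a) hab).2
    have hab'' : δ a (a ⊔ b) := (hSub a a b (hEq.refl a) hab).1
    have hac : δ a c := hConv a (a ⊓ b) (a ⊔ b) c hab' hab'' h1 h2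
    have h1 : δ a (a ⊔ c) := (hSub a a c (hEq.refl a) hac).1
    have h2 : δ a (b ⊔ c) := (hSub a b c hab hac).1
    have h3 : δ a (a ⊓ c) := (hSub a a c (hEq.refl a) hac).2
    have h4 : δ a (b ⊓ c) := (hSub a b c hab hac).2
    exact ⟨hEq.trans (hEq.symm h1) h2, hEq.trans (hEq.symm h3) h4⟩
  · intro h
    refine ⟨hE, ?_, ?_⟩
    · intro x a b hxa hxb
      have hab : δ a b := hE.trans (hE.symm hxa) hxb
      have := h a b a hab inf_le_left le_sup_left
      rw [sup_idem, inf_idem, sup_comm, inf_comm] at this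
      exact ⟨hE.trans hxa this.1, hE.trans hxa this.2⟩
    · intro x a b c hxa hxb hac hcb
      have hab : δ a b := hE.trans (hE.symm hxa) hxb
      have := (h a b c hab (le_trans inf_le_left hac) (le_trans hcb le_sup_right)).1
      rw [sup_eq_right.2 hac, sup_eq_left.2 hcb] at this
      exact hE.trans hxb (hE.symm this)
end

section
/- The set of all local congruences on a lattice L, ordered by inclusion, forms a complete lattice, where the infimum of a family is its intersection. -/
variable {L : Type*}

lemma inter_localCong [Lattice L] (T : Set {δ : L → L → Prop // LocalCong δ}) :
    LocalCong (fun x y => ∀ δ ∈ T, δ.1 x y) := by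
  refine ⟨⟨fun x δ hδ => δ.2.1.refl x, fun h δ hδ => δ.2.1.symm (h δ hδ),
      fun h h' δ hδ => δ.2.1.trans (h δ hδ) (h' δ hδ)⟩, ?_, ?_⟩
  · intro x a b ha hb
    exact ⟨fun δ hδ => (δ.2.2.1 x a b (ha δ hδ) (hb δ hδ)).1,
      fun δ hδ => (δ.2.2.1 x a b (ha δ hδ) (hb δ hδ)).2⟩
  · intro x a b c ha hb hac hcb δ hδ
    exact δ.2.2.2 x a b c (ha δ hδ) (hb δ hδ) hac hcb

lemma inter_isGLB [Lattice L] (T : Set {δ : L → L → Prop // LocalCong δ}) :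
    IsGLB T ⟨fun x y => ∀ δ ∈ T, δ.1 x y, inter_localCong T⟩ := by
  constructor
  · intro δ hδ
    exact fun x y h => h δ hδ
  · intro δ hδ x y h ε hε
    exact hδ hε x y h

theorem stmt8 [Lattice L] (S : Set {δ : L → L → Prop // LocalCong δ}) :
    (∃ g : {δ : L → L → Prop // LocalCong δ},
      g.1 = (fun x y => ∀ δ ∈ S, δ.1 x y) ∧ IsGLB S g) ∧
    (∃ l : {δ : L → L → Prop // LocalCong δ}, IsLUB S l) := by
  constructor
  · exact ⟨_, rfl, inter_isGLB S⟩
  · refine ⟨⟨fun x y => ∀ δ ∈ upperBounds S, δ.1 x y,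
      inter_localCong (upperBounds S)⟩, ?_, ?_⟩
    · intro δ hδ
      exact (inter_isGLB (upperBounds S)).2 fun ε hε => hε hδ
    · intro δ hδ
      exact (inter_isGLB (upperBounds S)).1 hδ
end

section
/- Let δ be a local congruence on a lattice L. The preorder ≼_δ on the quotient L/δ, defined by [x]_δ ≼_δ [y]_δ iff there is a δ-sequence from some element of [x]_δ to some element of [y]_δ, is a partial order (i.e., antisymmetric) if and only if every δ-cycle in L is closed. -/
variable {L : Type*}

def lstep [Lattice L] (δ : L → L → Prop) : L → L → Prop :=
  fun a b => δ a b ∨ a ≤ b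

def classLe [Lattice L] (δ : L → L → Prop) (x y : L) : Prop :=
  ∃ x' y', δ x x' ∧ δ y y' ∧ Relation.ReflTransGen (lstep δ) x' y'

def ClosedCycles [Lattice L] (δ : L → L → Prop) : Prop :=
  ∀ l : List L, l.Chain' (lstep δ) → 2 ≤ l.length → l.head? = l.getLast? →
    ∀ a ∈ l, ∀ b ∈ l, δ a b

lemma chain'_rtg_getLast {r : L → L → Prop} :
    ∀ {l : List L}, l.Chain' r → ∀ a ∈ l, ∀ b, l.getLast? = some b →
      Relation.ReflTransGen r a b := by
  intro l
  induction l with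
  | nil => intro _ a ha; simp at ha
  | cons x xs ih =>
    intro hc a ha b hb
    rcases List.mem_cons.1 ha with rfl | ha
    · cases xs with
      | nil => simp at hb; subst hb; exact Relation.ReflTransGen.refl
      | cons y ys =>
        have hr : r a y := (List.isChain_cons_cons.1 hc).1
        have := ih (List.isChain_cons_cons.1 hc).2 y (by simp) b (by simpa using hb)
        exact Relation.ReflTransGen.head hr this
    · cases xs with
      | nil => simp at ha
      | cons y ys =>
        exact ih (List.isChain_cons_cons.1 hc).2 a ha b (by simpa using hb)

lemma chain'_rtg_head {r : L → L → Prop} :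
    ∀ {l : List L}, l.Chain' r → ∀ a, l.head? = some a → ∀ b ∈ l,
      Relation.ReflTransGen r a b := by
  intro l
  induction l with
  | nil => intro _ a ha; simp at ha
  | cons x xs ih =>
    intro hc a ha b hb
    have hxa : x = a := by simpa using ha
    cases hxa
    rcases List.mem_cons.1 hb with rfl | hb
    · exact Relation.ReflTransGen.refl
    · cases xs with
      | nil => simp at hb
      | cons y ys =>
        have hr : r x y := (List.isChain_cons_cons.1 hc).1
        exact Relation.ReflTransGen.head hr
          (ih (List.isChain_cons_cons.1 hc).2 y rfl b hb)

lemma chain_concat {r : L → L → Prop} :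
    ∀ {l1 : List L} {a m b : L} {l2 : List L}, List.Chain r a l1 →
      (a :: l1).getLast? = some m → r m b → List.Chain r b l2 →
      List.Chain r a (l1 ++ b :: l2) := by
  intro l1
  induction l1 with
  | nil =>
    intro a m b l2 _ hm hr hc2
    simp at hm; subst hm
    exact List.Chain.cons hr hc2
  | cons y ys ih =>
    intro a m b l2 hc1 hm hr hc2
    rcases List.chain_cons.1 hc1 with ⟨hay, hys⟩
    exact List.Chain.cons hay (ih hys (by simpa using hm) hr hc2)

theorem stmt13 [Lattice L] (δ : L → L → Prop) (h : LocalCong δ) :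
    (∀ x y, classLe δ x y → classLe δ y x → δ x y) ↔ ClosedCycles δ := by
  obtain ⟨heq, -, -⟩ := h
  constructor
  · intro anti l hc hlen hhl a ha b hb
    obtain ⟨g, hg⟩ : ∃ g, l.getLast? = some g := by
      cases l with
      | nil => simp at ha
      | cons x xs => exact ⟨_, List.getLast?_eq_getLast (by simp)⟩
    have hh : l.head? = some g := hhl.trans hg
    have pab : Relation.ReflTransGen (lstep δ) a b :=
      (chain'_rtg_getLast hc a ha g hg).trans (chain'_rtg_head hc g hh b hb)
    have pba : Relation.ReflTransGen (lstep δ) b a :=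
      (chain'_rtg_getLast hc b hb g hg).trans (chain'_rtg_head hc g hh a ha)
    exact anti a b ⟨a, b, heq.refl a, heq.refl b, pab⟩ ⟨b, a, heq.refl b, heq.refl a, pba⟩
  · intro cc x y ⟨x', y', hxx', hyy', pxy⟩ ⟨y'', x'', hyy'', hxx'', pyx⟩
    obtain ⟨l1, hc1, hl1⟩ := List.exists_isChain_cons_of_relationReflTransGen pxy
    obtain ⟨l2, hc2, hl2⟩ := List.exists_isChain_cons_of_relationReflTransGen pyx
    have hlast1 : (x' :: l1).getLast? = some y' := by
      rw [List.getLast?_eq_getLast (by simp), hl1]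
    have hlast2 : (y'' :: l2).getLast? = some x'' := by
      rw [List.getLast?_eq_getLast (by simp), hl2]
    set C : List L := x' :: (l1 ++ y'' :: (l2 ++ [x'])) with hC
    have hstep1 : lstep δ y' y'' := Or.inl (heq.trans (heq.symm hyy') hyy'')
    have hstep2 : lstep δ x'' x' := Or.inl (heq.trans (heq.symm hxx'') hxx')
    have hchain : List.Chain (lstep δ) x' (l1 ++ y'' :: (l2 ++ [x'])) :=
      chain_concat hc1 hlast1 hstep1
        (chain_concat hc2 hlast2 hstep2 List.Chain.nil)
    have hcC : C.Chain' (lstep δ) := hchain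
    have hheadC : C.head? = some x' := by simp [hC]
    have hlastC : C.getLast? = some x' := by
      have hCe : C = (x' :: (l1 ++ y'' :: l2)) ++ [x'] := by simp [hC]
      rw [hCe, List.getLast?_concat]
    have hy'C : y' ∈ C := by
      rcases List.mem_cons.1 (List.mem_of_mem_getLast? hlast1) with rfl | hm
      · simp [hC]
      · simp [hC, hm]
    have hδ : δ x' y' := by
      refine cc C hcC ?_ (hheadC.trans hlastC.symm) x' (by simp [hC]) y' hy'C
      simp [hC]; omega
    exact heq.trans hxx' (heq.trans hδ (heq.symm hyy'))
end

section
/- Let δ be a local congruence on a lattice L and suppose classes [x]_δ and [y]_δ satisfy [x]_δ ≼_δ [y]_δ and [y]_δ ≼_δ [x]_δ witnessed by actual order inequalities: there exist x₁, x₂ ∈ [x]_δ and y₁, y₂ ∈ [y]_δ with x₁ ≤ y₁ and y₂ ≤ x₂. Then [x]_δ = [y]_δ. -/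
variable {L : Type*}

theorem stmt14 [Lattice L] (δ : L → L → Prop) (h : LocalCong δ)
    (x y x₁ x₂ y₁ y₂ : L)
    (hx₁ : δ x x₁) (hx₂ : δ x x₂) (hy₁ : δ y y₁) (hy₂ : δ y y₂)
    (h₁ : x₁ ≤ y₁) (h₂ : y₂ ≤ x₂) :
    δ x y := by
  obtain ⟨heq, hjoin, hconv⟩ := h
  have hxj : δ x (x₁ ⊔ x₂) := (hjoin x x₁ x₂ hx₁ hx₂).1
  have hyj : δ y (y₁ ⊔ y₂) := (hjoin y y₁ y₂ hy₁ hy₂).1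
  have ha_x : δ x (x₁ ⊔ y₂) :=
    hconv x x₁ (x₁ ⊔ x₂) _ hx₁ hxj le_sup_left
      (sup_le_sup_left h₂ _)
  have ha_y : δ y (x₁ ⊔ y₂) :=
    hconv y y₂ (y₁ ⊔ y₂) _ hy₂ hyj le_sup_right
      (sup_le_sup_right h₁ _)
  exact heq.trans ha_x (heq.symm ha_y)
end

section
/- Let δ be a local congruence on a lattice L and let [x]_δ, [y]_δ, [c]_δ be classes such that there exist x₁, x₂ ∈ [x]_δ, c₁, c₂ ∈ [c]_δ, y₁, y₂ ∈ [y]_δ with x₁ ≤ c₁ ≤ y₁ and y₂ ≤ c₂ ≤ x₂. Then [x]_δ = [c]_δ = [y]_δ. -/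
variable {L : Type*}

theorem stmt15 [Lattice L] (δ : L → L → Prop) (h : LocalCong δ)
    (x c y x₁ x₂ c₁ c₂ y₁ y₂ : L)
    (hx₁ : δ x x₁) (hx₂ : δ x x₂) (hc₁ : δ c c₁) (hc₂ : δ c c₂)
    (hy₁ : δ y y₁) (hy₂ : δ y y₂)
    (h₁ : x₁ ≤ c₁) (h₂ : c₁ ≤ y₁) (h₃ : y₂ ≤ c₂) (h₄ : c₂ ≤ x₂) :
    δ x c ∧ δ c y ∧ δ x y := by
  obtain ⟨heq, hsl, hconv⟩ := h
  -- u = x₁ ⊔ c₂ is in both classes [x] and [c]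
  have hxu : δ x (x₁ ⊔ c₂) :=
    hconv x x₁ (x₁ ⊔ x₂) _ hx₁ (hsl x x₁ x₂ hx₁ hx₂).1 le_sup_left
      (sup_le le_sup_left (h₄.trans le_sup_right))
  have hcu : δ c (x₁ ⊔ c₂) :=
    hconv c c₂ (c₁ ⊔ c₂) _ hc₂ (hsl c c₁ c₂ hc₁ hc₂).1 le_sup_right
      (sup_le (h₁.trans le_sup_left) le_sup_right)
  have hxc : δ x c := heq.trans hxu (heq.symm hcu)
  -- v = y₂ ⊔ c₁ is in both classes [c] and [y]
  have hcv : δ c (y₂ ⊔ c₁) :=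
    hconv c c₁ (c₁ ⊔ c₂) _ hc₁ (hsl c c₁ c₂ hc₁ hc₂).1 le_sup_right
      (sup_le (h₃.trans le_sup_right) le_sup_left)
  have hyv : δ y (y₂ ⊔ c₁) :=
    hconv y y₂ (y₁ ⊔ y₂) _ hy₂ (hsl y y₁ y₂ hy₁ hy₂).1 le_sup_left
      (sup_le le_sup_right (h₂.trans le_sup_left))
  have hcy : δ c y := heq.trans hcv (heq.symm hyv)
  exact ⟨hxc, hcy, heq.trans hxc hcy⟩
end

section
/- Given a formal context (A, B, R), a subset D ⊆ A, and the equivalence relation ρ_D on the concept lattice (concepts related iff X₁^{↑_D↓} = X₂^{↑_D↓}), each equivalence class [(X,Y)]_D is a join-semilattice whose maximum element is the concept (X^{↑_D↓}, X^{↑_D↓↑}). -/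
variable {A B : Type*}

def upOp (R : A → B → Prop) (X : Set B) : Set A := {a | ∀ x ∈ X, R a x}

def downOp (R : A → B → Prop) (Y : Set A) : Set B := {b | ∀ a ∈ Y, R a b}

def upD (R : A → B → Prop) (D : Set A) (X : Set B) : Set A :=
  {a | a ∈ D ∧ ∀ x ∈ X, R a x}

def IsConcept (R : A → B → Prop) (p : Set B × Set A) : Prop :=
  upOp R p.1 = p.2 ∧ downOp R p.2 = p.1


lemma upD_eq (R : A → B → Prop) (D : Set A) (X : Set B) :
    upD R D X = D ∩ upOp R X := rfl

lemma subset_down_upD (R : A → B → Prop) (D : Set A) (X : Set B) :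
    X ⊆ downOp R (upD R D X) := fun b hb a ha => ha.2 b hb

lemma subset_down_up (R : A → B → Prop) (X : Set B) :
    X ⊆ downOp R (upOp R X) := fun b hb a ha => ha b hb

lemma subset_up_down (R : A → B → Prop) (Y : Set A) :
    Y ⊆ upOp R (downOp R Y) := fun a ha b hb => hb a ha

lemma upOp_anti (R : A → B → Prop) {X X' : Set B} (h : X ⊆ X') :
    upOp R X' ⊆ upOp R X := fun a ha b hb => ha b (h hb)

lemma downOp_anti (R : A → B → Prop) {Y Y' : Set A} (h : Y ⊆ Y') :
    downOp R Y' ⊆ downOp R Y := fun b hb a ha => hb a (h ha)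

lemma up_down_up (R : A → B → Prop) (X : Set B) :
    upOp R (downOp R (upOp R X)) = upOp R X :=
  Set.Subset.antisymm (upOp_anti R (subset_down_up R X))
    (fun a ha b hb => hb a ha)

lemma down_up_down (R : A → B → Prop) (Y : Set A) :
    downOp R (upOp R (downOp R Y)) = downOp R Y :=
  Set.Subset.antisymm (downOp_anti R (subset_up_down R Y))
    (subset_down_up R (downOp R Y))

lemma upD_down_upD (R : A → B → Prop) (D : Set A) (X : Set B) :
    upD R D (downOp R (upD R D X)) = upD R D X :=
  Set.Subset.antisymm
    (fun a ha => ⟨ha.1, fun x hx => ha.2 x (subset_down_upD R D X hx)⟩)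
    (fun a ha => ⟨ha.1, fun b hb => hb a ha⟩)

lemma upD_down_up (R : A → B → Prop) (D : Set A) (X : Set B) :
    upD R D (downOp R (upOp R X)) = upD R D X := by
  rw [upD_eq, upD_eq, up_down_up]

lemma upD_union (R : A → B → Prop) (D : Set A) (X Y : Set B) :
    upD R D (X ∪ Y) = upD R D X ∩ upD R D Y := by
  ext a
  constructor
  · rintro ⟨hD, h⟩
    exact ⟨⟨hD, fun x hx => h x (Or.inl hx)⟩, ⟨hD, fun x hx => h x (Or.inr hx)⟩⟩
  · rintro ⟨⟨hD, h1⟩, ⟨_, h2⟩⟩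
    exact ⟨hD, fun x hx => hx.elim (h1 x) (h2 x)⟩

theorem stmt17 (R : A → B → Prop) (D : Set A)
    (c : {p : Set B × Set A // IsConcept R p}) :
    IsConcept R (downOp R (upD R D c.1.1), upOp R (downOp R (upD R D c.1.1))) ∧
    downOp R (upD R D (downOp R (upD R D c.1.1))) = downOp R (upD R D c.1.1) ∧
    (∀ c' : {p : Set B × Set A // IsConcept R p},
      downOp R (upD R D c'.1.1) = downOp R (upD R D c.1.1) →
        c'.1.1 ⊆ downOp R (upD R D c.1.1)) ∧
    (∀ c₁ c₂ : {p : Set B × Set A // IsConcept R p},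
      downOp R (upD R D c₁.1.1) = downOp R (upD R D c.1.1) →
      downOp R (upD R D c₂.1.1) = downOp R (upD R D c.1.1) →
        downOp R (upD R D (downOp R (upOp R (c₁.1.1 ∪ c₂.1.1)))) =
          downOp R (upD R D c.1.1)) := by
  refine ⟨⟨rfl, down_up_down R _⟩, congrArg (downOp R) (upD_down_upD R D c.1.1), ?_, ?_⟩
  · intro c' h
    exact h ▸ subset_down_upD R D c'.1.1
  · intro c₁ c₂ h₁ h₂
    have e1 : upD R D c₁.1.1 = upD R D (downOp R (upD R D c.1.1)) := by
      rw [← upD_down_upD R D c₁.1.1, h₁]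
    have e2 : upD R D c₂.1.1 = upD R D (downOp R (upD R D c.1.1)) := by
      rw [← upD_down_upD R D c₂.1.1, h₂]
    rw [upD_down_up, upD_union, e1, e2, Set.inter_self, upD_down_upD]
end
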